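/- Let R = GF(2)[c]/(c³) and S = R[[d]]. The element A = (1 + c)·(1 + c + d)·(1 + d + c²d)·(1 + d)^{-1} is a unit in S, and for every natural number i the coefficient of c² in the d^i coefficient of A^{-1} equals 1 if i ≡ 0 or 1 (mod 4), and 0 if i ≡ 2 or 3 (mod 4). In particular, for i = 2^u(2v+1) with u ≥ 2 this coefficient equals 1. -/

import Mathlib

open Polynomial PowerSeries

noncomputable section

/-- The ring `R = GF(2)[c] / (c³)`. -/
abbrev R2 : Type := AdjoinRoot (Polynomial.X ^ 3 : Polynomial (ZMod 2))

/-- The class of the variable `c` in `R = GF(2)[c] / (c³)`. -/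
def cR : R2 := AdjoinRoot.root _

/-- The power series ring `S = R[[d]]`. -/
abbrev S2 : Type := PowerSeries R2

/-- The image of `c` in `S = R[[d]]`. -/
def cS : S2 := PowerSeries.C cR

/-- The variable `d` of `S = R[[d]]`. -/
def dS : S2 := PowerSeries.X

/-- The coefficient of `c²` of an element of `R = GF(2)[c] / (c³)`,
computed via the unique representative polynomial of degree `< 3`. -/
def coefc2 (x : R2) : ZMod 2 :=
  (AdjoinRoot.modByMonicHom (Polynomial.monic_X_pow 3) x).coeff 2

lemma h2R : (2 : R2) = 0 := by
  have h0 : (2 : ZMod 2) = 0 := rfl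
  calc (2 : R2) = algebraMap (ZMod 2) R2 2 := (map_ofNat _ 2).symm
    _ = 0 := by rw [h0, map_zero]

lemma hc3 : cR ^ 3 = 0 := by
  have h : cR = AdjoinRoot.mk (Polynomial.X ^ 3 : Polynomial (ZMod 2)) Polynomial.X :=
    (AdjoinRoot.mk_X).symm
  rw [h, ← map_pow, AdjoinRoot.mk_self]

lemma h2S : (2 : S2) = 0 := by
  have h : (2 : S2) = PowerSeries.C 2 := by rw [map_ofNat]
  rw [h, h2R, map_zero]

lemma hcS3 : cS ^ 3 = 0 := by
  rw [cS, ← map_pow, hc3, map_zero]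

/-- The geometric series `Σ (1+c)^i d^i`. -/
def G2 : S2 := PowerSeries.mk fun i => (1 + cR) ^ i

lemma geom : (1 + (1 + cS) * dS) * G2 = 1 := by
  have key : (1 + (1 + cS) * dS) * G2
      = G2 + PowerSeries.C (1 + cR) * (PowerSeries.X * G2) := by
    rw [cS, dS, map_add, map_one]
    ring
  rw [key]
  ext n
  cases n with
  | zero => simp [G2]
  | succ n =>
      rw [map_add, PowerSeries.coeff_C_mul, PowerSeries.coeff_succ_X_mul]
      simp only [G2, PowerSeries.coeff_mk, PowerSeries.coeff_one, Nat.succ_ne_zero, if_false]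
      linear_combination (1 + cR) ^ (n + 1) * h2R

/-- The inverse of `A`. -/
def B2 : S2 := PowerSeries.C (1 + cR ^ 2) * G2

lemma e1 : (1 : S2) + cS ^ 2 = PowerSeries.C (1 + cR ^ 2) := by
  rw [cS, map_add, map_one, map_pow]

lemma hsq : (1 + cR ^ 2) * (1 + cR ^ 2) = 1 := by
  linear_combination cR ^ 2 * h2R + cR * hc3

lemma hA'B : ((1 + cS ^ 2) * (1 + (1 + cS) * dS)) * B2 = 1 := by
  have h : ((1 + cS ^ 2) * (1 + (1 + cS) * dS)) * B2
      = ((1 + cS ^ 2) * PowerSeries.C (1 + cR ^ 2)) * ((1 + (1 + cS) * dS) * G2) := by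
    rw [B2]; ring
  rw [h, geom, mul_one, e1, ← map_mul, hsq, map_one]

lemma factored : (1 + cS) * (1 + cS + dS) * (1 + dS + cS ^ 2 * dS)
    = (1 + cS ^ 2) * (1 + (1 + cS) * dS) * (1 + dS) := by
  linear_combination (cS + cS * dS) * h2S + ((1 + cS) * dS) * hcS3

lemma hu1d : IsUnit ((1 : S2) + dS) := by
  rw [dS, PowerSeries.isUnit_iff_constantCoeff]
  simp

lemma hAeq : (1 + cS) * (1 + cS + dS) * (1 + dS + cS ^ 2 * dS) * Ring.inverse (1 + dS)
    = (1 + cS ^ 2) * (1 + (1 + cS) * dS) := by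
  rw [factored]
  have h := Ring.mul_inverse_cancel _ hu1d
  calc (1 + cS ^ 2) * (1 + (1 + cS) * dS) * (1 + dS) * Ring.inverse (1 + dS)
      = (1 + cS ^ 2) * (1 + (1 + cS) * dS) * ((1 + dS) * Ring.inverse (1 + dS)) := by ring
    _ = (1 + cS ^ 2) * (1 + (1 + cS) * dS) := by rw [h, mul_one]

lemma hinv : Ring.inverse ((1 + cS) * (1 + cS + dS) * (1 + dS + cS ^ 2 * dS)
    * Ring.inverse (1 + dS)) = B2 := by
  rw [hAeq]
  have hU : IsUnit ((1 + cS ^ 2) * (1 + (1 + cS) * dS)) := IsUnit.of_mul_eq_one _ hA'B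
  calc Ring.inverse ((1 + cS ^ 2) * (1 + (1 + cS) * dS))
      = Ring.inverse ((1 + cS ^ 2) * (1 + (1 + cS) * dS))
        * (((1 + cS ^ 2) * (1 + (1 + cS) * dS)) * B2) := by rw [hA'B, mul_one]
    _ = (Ring.inverse ((1 + cS ^ 2) * (1 + (1 + cS) * dS))
        * ((1 + cS ^ 2) * (1 + (1 + cS) * dS))) * B2 := by ring
    _ = B2 := by rw [Ring.inverse_mul_cancel _ hU, one_mul]

lemma coeff_B2 (i : ℕ) : PowerSeries.coeff i B2 = (1 + cR ^ 2) * (1 + cR) ^ i := by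
  rw [B2, PowerSeries.coeff_C_mul, G2, PowerSeries.coeff_mk]

lemma h4 : (1 + cR) ^ 4 = 1 := by
  linear_combination (2 * cR + 3 * cR ^ 2) * h2R + (4 + cR) * hc3

lemma pow_mod4 (i : ℕ) : (1 + cR) ^ i = (1 + cR) ^ (i % 4) := by
  conv_lhs => rw [← Nat.div_add_mod i 4]
  rw [pow_add, pow_mul, h4, one_pow, one_mul]

lemma coefc2_mk (f : Polynomial (ZMod 2)) (hf : f.degree < 3) :
    coefc2 (AdjoinRoot.mk _ f) = f.coeff 2 := by
  unfold coefc2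
  rw [AdjoinRoot.modByMonicHom_mk]
  rw [(Polynomial.modByMonic_eq_self_iff (Polynomial.monic_X_pow 3)).2]
  rw [Polynomial.degree_X_pow]
  exact_mod_cast hf

lemma val0 : coefc2 ((1 + cR ^ 2) * (1 + cR) ^ 0) = 1 := by
  have h : AdjoinRoot.mk (Polynomial.X ^ 3 : Polynomial (ZMod 2)) (1 + Polynomial.X ^ 2)
      = (1 + cR ^ 2) * (1 + cR) ^ 0 := by
    rw [map_add, map_one, map_pow, AdjoinRoot.mk_X, pow_zero, mul_one]
    rfl
  rw [← h, coefc2_mk]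
  · simp [Polynomial.coeff_add, Polynomial.coeff_one, Polynomial.coeff_X_pow]
  · have h1 : (1 + Polynomial.X ^ 2 : Polynomial (ZMod 2)).degree ≤ 2 := by compute_degree!
    exact lt_of_le_of_lt h1 (by decide)

lemma val1 : coefc2 ((1 + cR ^ 2) * (1 + cR) ^ 1) = 1 := by
  have h0 : (1 + cR ^ 2) * (1 + cR) ^ 1 = 1 + cR + cR ^ 2 := by
    linear_combination hc3
  have h : AdjoinRoot.mk (Polynomial.X ^ 3 : Polynomial (ZMod 2))
      (1 + Polynomial.X + Polynomial.X ^ 2) = 1 + cR + cR ^ 2 := by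
    rw [map_add, map_add, map_one, map_pow, AdjoinRoot.mk_X]
    rfl
  rw [h0, ← h, coefc2_mk]
  · simp [Polynomial.coeff_add, Polynomial.coeff_one, Polynomial.coeff_X, Polynomial.coeff_X_pow]
  · have h1 : (1 + Polynomial.X + Polynomial.X ^ 2 : Polynomial (ZMod 2)).degree ≤ 2 := by
      compute_degree!
    exact lt_of_le_of_lt h1 (by decide)

lemma val2 : coefc2 ((1 + cR ^ 2) * (1 + cR) ^ 2) = 0 := by
  have h0 : (1 + cR ^ 2) * (1 + cR) ^ 2 = 1 := by
    linear_combination (cR + cR ^ 2 + cR ^ 3) * h2R + cR * hc3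
  have h : AdjoinRoot.mk (Polynomial.X ^ 3 : Polynomial (ZMod 2)) 1 = 1 := map_one _
  rw [h0, ← h, coefc2_mk]
  · simp [Polynomial.coeff_one]
  · rw [Polynomial.degree_one]; decide

lemma val3 : coefc2 ((1 + cR ^ 2) * (1 + cR) ^ 3) = 0 := by
  have h0 : (1 + cR ^ 2) * (1 + cR) ^ 3 = 1 + cR := by
    linear_combination (cR + 2 * cR ^ 2) * h2R + (4 + 3 * cR + cR ^ 2) * hc3
  have h : AdjoinRoot.mk (Polynomial.X ^ 3 : Polynomial (ZMod 2)) (1 + Polynomial.X)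
      = 1 + cR := by
    rw [map_add, map_one, AdjoinRoot.mk_X]
    rfl
  rw [h0, ← h, coefc2_mk]
  · simp [Polynomial.coeff_add, Polynomial.coeff_one, Polynomial.coeff_X]
  · have h1 : (1 + Polynomial.X : Polynomial (ZMod 2)).degree ≤ 2 := by compute_degree!
    exact lt_of_le_of_lt h1 (by decide)

theorem unit_and_coefc2_a_one :
    IsUnit ((1 + cS) * (1 + cS + dS) * (1 + dS + cS ^ 2 * dS) * Ring.inverse (1 + dS)) ∧
      (∀ i : ℕ,
        coefc2 (PowerSeries.coeff i
            (Ring.inverse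
              ((1 + cS) * (1 + cS + dS) * (1 + dS + cS ^ 2 * dS) * Ring.inverse (1 + dS)))) =
          if i % 4 = 0 ∨ i % 4 = 1 then 1 else 0) ∧
      ∀ u v : ℕ, 2 ≤ u →
        coefc2 (PowerSeries.coeff (2 ^ u * (2 * v + 1))
            (Ring.inverse
              ((1 + cS) * (1 + cS + dS) * (1 + dS + cS ^ 2 * dS) * Ring.inverse (1 + dS)))) = 1 := by
  have hmain : ∀ i : ℕ,
      coefc2 (PowerSeries.coeff i
          (Ring.inverse
            ((1 + cS) * (1 + cS + dS) * (1 + dS + cS ^ 2 * dS) * Ring.inverse (1 + dS)))) =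
        if i % 4 = 0 ∨ i % 4 = 1 then 1 else 0 := by
    intro i
    rw [hinv, coeff_B2, pow_mod4]
    have h4i : i % 4 = 0 ∨ i % 4 = 1 ∨ i % 4 = 2 ∨ i % 4 = 3 := by omega
    rcases h4i with h | h | h | h <;> rw [h]
    · rw [val0, if_pos (Or.inl rfl)]
    · rw [val1, if_pos (Or.inr rfl)]
    · rw [val2, if_neg (by omega)]
    · rw [val3, if_neg (by omega)]
  refine ⟨?_, hmain, ?_⟩
  · rw [hAeq]
    exact IsUnit.of_mul_eq_one _ hA'B
  · intro u v hu
    rw [hmain]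
    have h : (2 ^ u * (2 * v + 1)) % 4 = 0 := by
      obtain ⟨w, rfl⟩ : ∃ w, u = 2 + w := ⟨u - 2, by omega⟩
      rw [pow_add]
      have h2 : 2 ^ 2 * 2 ^ w * (2 * v + 1) = 4 * (2 ^ w * (2 * v + 1)) := by ring
      rw [h2, Nat.mul_mod_right]
    rw [h]
    simp

end
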